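/- Let C ⊆ L0+ be convexly compact (convex, closed in the topology of convergence in probability, and bounded). Then C has at least one outer support point, i.e. C^osp ≠ ∅. -/

import Mathlib

open MeasureTheory Filter Set

noncomputable section

variable {Ω : Type*} [MeasurableSpace Ω]

/-- The nonnegative orthant `L⁰₊` of the space `L⁰` of (a.e.-equivalence classes of)
random variables over `(Ω, ℱ, P)`. -/
def L0plus (P : Measure Ω) : Set (Ω →ₘ[P] ℝ) := {f | 0 ≤ f}

/-- The metric `(f, g) ↦ E[1 ∧ |f - g|]` inducing the topology of convergence
in probability on `L⁰`. -/
def dist0 (P : Measure Ω) (f g : Ω →ₘ[P] ℝ) : ℝ :=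
  ∫ ω, min 1 |f ω - g ω| ∂P

/-- Convergence in probability of a sequence in `L⁰`. -/
def Tendsto0 (P : Measure Ω) (f : ℕ → Ω →ₘ[P] ℝ) (g : Ω →ₘ[P] ℝ) : Prop :=
  Tendsto (fun n => dist0 P (f n) g) atTop (nhds 0)

/-- Closure of a set in `L⁰` with respect to the topology of convergence in probability. -/
def closure0 (P : Measure Ω) (C : Set (Ω →ₘ[P] ℝ)) : Set (Ω →ₘ[P] ℝ) :=
  {f | ∀ ε : ℝ, 0 < ε → ∃ g ∈ C, dist0 P f g < ε}

/-- A set of `L⁰` is closed iff it contains its closure. -/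
def IsClosed0 (P : Measure Ω) (C : Set (Ω →ₘ[P] ℝ)) : Prop :=
  closure0 P C ⊆ C

/-- Boundedness (in probability) of a set `C ⊆ L⁰₊` : `lim_{ℓ → ∞} sup_{f ∈ C} P[f > ℓ] = 0`. -/
def Bounded0 (P : Measure Ω) (C : Set (Ω →ₘ[P] ℝ)) : Prop :=
  Tendsto (fun ℓ : ℝ => ⨆ f ∈ C, P {ω | ℓ < f ω}) atTop (nhds 0)

/-- The set `C^max` of maximal elements of `C ⊆ L⁰₊` : `f ∈ C` such that `f ≤ g` a.s.
and `g ∈ C` imply `f = g` a.s. -/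
def maxSet (P : Measure Ω) (C : Set (Ω →ₘ[P] ℝ)) : Set (Ω →ₘ[P] ℝ) :=
  {f | f ∈ C ∧ ∀ g ∈ C, f ≤ g → f = g}

/-- `C` is max-closed if every maximal element of its closure already belongs to `C`. -/
def MaxClosed (P : Measure Ω) (C : Set (Ω →ₘ[P] ℝ)) : Prop :=
  maxSet P (closure0 P C) ⊆ C

/-- The pairing `⟨μ, f⟩ = ∫ f dμ ∈ [0, ∞]` between a nonnegative measure `μ` and `f ∈ L⁰₊`. -/
def pairing {P : Measure Ω} (μ : Measure Ω) (f : Ω →ₘ[P] ℝ) : ENNReal :=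
  ∫⁻ ω, ENNReal.ofReal (f ω) ∂μ

/-- The set `C^osp` of outer support points of `C ⊆ L⁰₊`: points `g ∈ C^max` for which there
is a σ-finite nonnegative measure `μ ≪ P` with `0 < sup_{f ∈ C} ⟨μ, f⟩ = ⟨μ, g⟩ < ∞`;
by convention `{0}^osp = {0}`. -/
def osp (P : Measure Ω) (C : Set (Ω →ₘ[P] ℝ)) : Set (Ω →ₘ[P] ℝ) :=
  {g | g ∈ maxSet P C ∧
    (C = {0} ∨ ∃ μ : Measure Ω, μ ≪ P ∧ SigmaFinite μ ∧
      0 < pairing μ g ∧ pairing μ g < ⊤ ∧ (⨆ f ∈ C, pairing μ f) = pairing μ g)}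

/-- The solid hull of `C ⊆ L⁰₊`. -/
def solidHull (P : Measure Ω) (C : Set (Ω →ₘ[P] ℝ)) : Set (Ω →ₘ[P] ℝ) :=
  {f | f ∈ L0plus P ∧ ∃ g ∈ C, f ≤ g}

/-- A set `S ⊆ L⁰₊` is solid if `g ∈ S` and `0 ≤ f ≤ g` imply `f ∈ S`. -/
def Solid (P : Measure Ω) (S : Set (Ω →ₘ[P] ℝ)) : Prop :=
  ∀ g ∈ S, ∀ f : Ω →ₘ[P] ℝ, 0 ≤ f → f ≤ g → f ∈ S

/-- `(g n)` is a sequence of forward convex combinations of `(f n)`. -/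
def ForwardConvexComb (P : Measure Ω) (f g : ℕ → Ω →ₘ[P] ℝ) : Prop :=
  ∀ n : ℕ, g n ∈ convexHull ℝ (f '' Set.Ici n)

end


namespace Stmt2Aux
open Real
open scoped ENNReal NNReal Topology

noncomputable def uu (x : ℝ) : ℝ := 1 - Real.exp (-x)

lemma uu_le_one (x : ℝ) : uu x ≤ 1 := by
  have := (Real.exp_pos (-x)).le
  simp only [uu]; linarith

lemma uu_nonneg {x : ℝ} (hx : 0 ≤ x) : 0 ≤ uu x := by
  have : Real.exp (-x) ≤ Real.exp 0 := Real.exp_le_exp.2 (by linarith)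
  simp only [uu]; rw [Real.exp_zero] at this; linarith

lemma uu_mono : Monotone uu := by
  intro x y hxy
  simp only [uu]
  have : Real.exp (-y) ≤ Real.exp (-x) := Real.exp_le_exp.2 (by linarith)
  linarith

lemma exp_neg_le_one {x : ℝ} (hx : 0 ≤ x) : Real.exp (-x) ≤ 1 := by
  rw [show (1:ℝ) = Real.exp 0 by rw [Real.exp_zero]]
  exact Real.exp_le_exp.2 (by linarith)

lemma abs_uu_le {x : ℝ} (hx : 0 ≤ x) : |uu x| ≤ 1 :=
  abs_le.2 ⟨by linarith [uu_nonneg hx], uu_le_one x⟩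

lemma sq_half_identity (x y : ℝ) :
    (Real.exp (-(x/2)) - Real.exp (-(y/2)))^2 / 2 = uu ((x + y)/2) - (uu x + uu y)/2 := by
  have hx : Real.exp (-x) = Real.exp (-(x/2)) * Real.exp (-(x/2)) := by
    rw [← Real.exp_add]; congr 1; ring
  have hy : Real.exp (-y) = Real.exp (-(y/2)) * Real.exp (-(y/2)) := by
    rw [← Real.exp_add]; congr 1; ring
  have hxy : Real.exp (-((x+y)/2)) = Real.exp (-(x/2)) * Real.exp (-(y/2)) := by
    rw [← Real.exp_add]; congr 1; ring
  simp only [uu, hx, hy, hxy]; ring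

lemma gap_lower {x y ℓ ε : ℝ} (hx0 : 0 ≤ x) (hxl : x ≤ ℓ) (hxy : x + ε ≤ y) (hε : 0 < ε) :
    Real.exp (-ℓ) * (1 - Real.exp (-(ε/2)))^2 ≤ (Real.exp (-(x/2)) - Real.exp (-(y/2)))^2 := by
  have h1 : Real.exp (-(x/2)) - Real.exp (-(y/2))
      = Real.exp (-(x/2)) * (1 - Real.exp (-((y - x)/2))) := by
    rw [mul_sub, mul_one, ← Real.exp_add]; congr 2; ring
  have he1 : Real.exp (-(ε/2)) < 1 := by
    rw [show (1:ℝ) = Real.exp 0 by rw [Real.exp_zero]]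
    exact Real.exp_lt_exp.2 (by linarith)
  have he2 : Real.exp (-((y-x)/2)) ≤ Real.exp (-(ε/2)) := Real.exp_le_exp.2 (by linarith)
  have hl2 : Real.exp (-(ℓ/2)) ≤ Real.exp (-(x/2)) := Real.exp_le_exp.2 (by linarith)
  have hll : Real.exp (-ℓ) = Real.exp (-(ℓ/2)) * Real.exp (-(ℓ/2)) := by
    rw [← Real.exp_add]; congr 1; ring
  have key : Real.exp (-(ℓ/2)) * (1 - Real.exp (-(ε/2)))
      ≤ Real.exp (-(x/2)) * (1 - Real.exp (-((y-x)/2))) := by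
    apply mul_le_mul hl2 (by linarith) (by linarith) (Real.exp_pos _).le
  have hnn : 0 ≤ Real.exp (-(ℓ/2)) * (1 - Real.exp (-(ε/2))) := by
    apply mul_nonneg (Real.exp_pos _).le (by linarith)
  calc Real.exp (-ℓ) * (1 - Real.exp (-(ε/2)))^2
      = (Real.exp (-(ℓ/2)) * (1 - Real.exp (-(ε/2))))^2 := by rw [hll]; ring
    _ ≤ (Real.exp (-(x/2)) * (1 - Real.exp (-((y-x)/2))))^2 := by
        apply pow_le_pow_left₀ hnn key
    _ = (Real.exp (-(x/2)) - Real.exp (-(y/2)))^2 := by rw [h1]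

lemma slope_mono {b d t1 t2 : ℝ} (h1 : 0 < t1) (h12 : t1 ≤ t2) :
    (uu (b + t2*d) - uu b)/t2 ≤ (uu (b + t1*d) - uu b)/t1 := by
  have h2 : 0 < t2 := lt_of_lt_of_le h1 h12
  have hconv := convexOn_exp.2 (mem_univ (-b)) (mem_univ (-(b + t2*d)))
    (show (0:ℝ) ≤ (t2 - t1)/t2 from div_nonneg (by linarith) h2.le) (show (0:ℝ) ≤ t1/t2 by positivity)
    (show (t2 - t1)/t2 + t1/t2 = 1 by field_simp; ring)
  have hpt : ((t2 - t1)/t2) • (-b) + (t1/t2) • (-(b + t2*d)) = -(b + t1*d) := by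
    simp only [smul_eq_mul]
    field_simp; ring
  rw [hpt] at hconv
  have hE : Real.exp (-(b + t1*d)) ≤ ((t2-t1)/t2) * Real.exp (-b) + (t1/t2) * Real.exp (-(b + t2*d)) := by
    simpa [smul_eq_mul] using hconv
  rw [div_le_div_iff₀ h2 h1]
  simp only [uu]
  have := mul_le_mul_of_nonneg_left hE h2.le
  have hexp : t2 * (((t2-t1)/t2) * Real.exp (-b) + (t1/t2) * Real.exp (-(b + t2*d)))
      = (t2 - t1) * Real.exp (-b) + t1 * Real.exp (-(b + t2*d)) := by
    field_simp
  rw [hexp] at this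
  nlinarith [this]

lemma self_mul_exp_neg_le_one {z : ℝ} (hz : 0 ≤ z) : z * Real.exp (-z) ≤ 1 := by
  have h := Real.exp_pos z
  rw [Real.exp_neg, ← div_eq_mul_inv, div_le_one h]
  linarith [Real.add_one_le_exp z]

lemma hasDeriv_uu (b d : ℝ) :
    HasDerivAt (fun t : ℝ => uu (b + t * d)) (Real.exp (-b) * d) 0 := by
  have h1 : HasDerivAt (fun t : ℝ => b + t * d) d 0 := by
    simpa using (hasDerivAt_mul_const (c := d) (x := (0:ℝ))).const_add b
  have h2 : HasDerivAt (fun x : ℝ => uu x) (Real.exp (-(b + 0 * d))) (b + 0 * d) := by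
    have hneg : HasDerivAt (fun x : ℝ => -x) (-1) (b + 0*d) := (hasDerivAt_id _).neg
    have hexp := (Real.hasDerivAt_exp (-(b + 0*d))).comp (b + 0*d) hneg
    have : HasDerivAt (fun x : ℝ => 1 - Real.exp (-x))
        (-(Real.exp (-(b + 0*d)) * (-1))) (b + 0*d) := hexp.const_sub 1
    simpa [uu] using this
  have := h2.comp 0 h1
  simp at this; exact this

lemma slope_tendsto (b d : ℝ) :
    Tendsto (fun n : ℕ => (uu (b + (1/2:ℝ)^n * d) - uu b) / (1/2:ℝ)^n) atTop
      (𝓝 (Real.exp (-b) * d)) := by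
  have hD := (hasDerivAt_iff_tendsto_slope_zero.1 (hasDeriv_uu b d))
  have hseq : Tendsto (fun n : ℕ => (1/2:ℝ)^n) atTop (𝓝[≠] (0:ℝ)) := by
    apply tendsto_nhdsWithin_of_tendsto_nhds_of_eventually_within
    · exact tendsto_pow_atTop_nhds_zero_of_lt_one (by norm_num) (by norm_num)
    · refine Eventually.of_forall fun n => ?_
      simp only [Set.mem_compl_iff, Set.mem_singleton_iff]
      positivity
  have key := hD.comp hseq
  apply key.congr
  intro n
  simp only [Function.comp_apply, smul_eq_mul, zero_add, zero_mul, add_zero]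
  ring
end Stmt2Aux

set_option linter.unusedSectionVars false
namespace Stmt2Aux
open Real
open scoped ENNReal NNReal Topology
variable {Ω : Type*} [MeasurableSpace Ω] {P : Measure Ω} [IsProbabilityMeasure P]

lemma ae_nonneg {f : Ω →ₘ[P] ℝ} (hf : (0 : Ω →ₘ[P] ℝ) ≤ f) : ∀ᵐ ω ∂P, 0 ≤ f ω := by
  filter_upwards [MeasureTheory.AEEqFun.coeFn_le.2 hf,
    MeasureTheory.AEEqFun.coeFn_zero (β := ℝ) (μ := P)] with ω h1 h2
  rw [h2] at h1; exact h1

lemma meas_coe (f : Ω →ₘ[P] ℝ) : Measurable (f : Ω → ℝ) :=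
  f.stronglyMeasurable.measurable

lemma integrable_bdd {φ : Ω → ℝ} (hm : AEStronglyMeasurable φ P) {c : ℝ}
    (h : ∀ᵐ ω ∂P, |φ ω| ≤ c) : Integrable φ P :=
  Integrable.mono' (integrable_const c) hm (by simpa [Real.norm_eq_abs] using h)

lemma continuous_uu : Continuous uu :=
  continuous_const.sub (Real.continuous_exp.comp continuous_neg)

lemma integrable_uu {f : Ω →ₘ[P] ℝ} (hf : (0:Ω →ₘ[P] ℝ) ≤ f) :
    Integrable (fun ω => uu (f ω)) P :=
  integrable_bdd (continuous_uu.comp_aestronglyMeasurable f.aestronglyMeasurable)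
    ((ae_nonneg hf).mono fun _ω h => abs_uu_le h)

noncomputable def UU (P : Measure Ω) (f : Ω →ₘ[P] ℝ) : ℝ := ∫ ω, uu (f ω) ∂P

lemma UU_le_one {f : Ω →ₘ[P] ℝ} (hf : (0:Ω →ₘ[P] ℝ) ≤ f) : UU P f ≤ 1 := by
  have h := integral_mono (integrable_uu hf) (integrable_const 1) (fun ω => uu_le_one (f ω))
  simpa [UU] using h

lemma UU_mono {f g : Ω →ₘ[P] ℝ} (hf : (0:Ω →ₘ[P] ℝ) ≤ f) (hg : (0:Ω →ₘ[P] ℝ) ≤ g)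
    (h : f ≤ g) : UU P f ≤ UU P g :=
  integral_mono_ae (integrable_uu hf) (integrable_uu hg)
    ((MeasureTheory.AEEqFun.coeFn_le.2 h).mono fun _ω hw => uu_mono hw)

lemma UU_zero : UU P (0 : Ω →ₘ[P] ℝ) = 0 := by
  have : (fun ω => uu ((0 : Ω →ₘ[P] ℝ) ω)) =ᵐ[P] (fun _ => (0:ℝ)) := by
    filter_upwards [MeasureTheory.AEEqFun.coeFn_zero (β := ℝ) (μ := P)] with ω h
    simp [h, uu]
  rw [UU, integral_congr_ae this, integral_zero]

lemma eq_zero_of_ae_zero {f : Ω →ₘ[P] ℝ} (h : (f : Ω → ℝ) =ᵐ[P] (fun _ => (0:ℝ))) :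
    f = 0 := by
  apply MeasureTheory.AEEqFun.ext
  filter_upwards [h, MeasureTheory.AEEqFun.coeFn_zero (β := ℝ) (μ := P)] with ω h1 h2
  rw [h1, h2]; rfl

lemma UU_pos {f : Ω →ₘ[P] ℝ} (hf : (0:Ω →ₘ[P] ℝ) ≤ f) (hne : f ≠ 0) : 0 < UU P f := by
  rcases lt_or_ge 0 (UU P f) with h | h
  · exact h
  exfalso
  have hnn : 0 ≤ᵐ[P] (fun ω => uu (f ω)) := (ae_nonneg hf).mono fun _ω hw => uu_nonneg hw
  have h0 : ∫ ω, uu (f ω) ∂P = 0 :=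
    le_antisymm h (integral_nonneg_of_ae hnn)
  rw [integral_eq_zero_iff_of_nonneg_ae hnn (integrable_uu hf)] at h0
  apply hne
  apply eq_zero_of_ae_zero
  filter_upwards [h0, ae_nonneg hf] with ω h1 h2
  have : Real.exp (-(f ω)) = 1 := by simp only [uu, Pi.zero_apply] at h1; linarith
  have := Real.exp_eq_one_iff _ |>.1 this
  simpa using (neg_eq_zero.1 this)

lemma integrable_min1 (f g : Ω →ₘ[P] ℝ) :
    Integrable (fun ω => min 1 |f ω - g ω|) P := by
  apply integrable_bdd
  · exact ((continuous_min.comp (continuous_const.prodMk continuous_abs)).comp_aestronglyMeasurable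
      (((meas_coe f).sub (meas_coe g)).aestronglyMeasurable)).congr (by rfl)
  · exact Eventually.of_forall fun ω => by
      rw [abs_of_nonneg (le_min zero_le_one (abs_nonneg _))]
      exact min_le_left _ _

lemma dist0_comm (f g : Ω →ₘ[P] ℝ) : dist0 P f g = dist0 P g f := by
  unfold dist0; congr 1; funext ω; rw [abs_sub_comm]

lemma dist0_nonneg (f g : Ω →ₘ[P] ℝ) : 0 ≤ dist0 P f g :=
  integral_nonneg fun ω => le_min zero_le_one (abs_nonneg _) |>.trans (min_le_min le_rfl le_rfl) |>.trans le_rfl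

lemma markov0 {f g : Ω →ₘ[P] ℝ} {r : ℝ} (hr0 : 0 < r) (hr1 : r ≤ 1) :
    P {ω | r ≤ |f ω - g ω|} ≤ ENNReal.ofReal (dist0 P f g / r) := by
  set S := {ω | r ≤ |f ω - g ω|} with hS
  have hSm : MeasurableSet S :=
    measurableSet_le measurable_const ((meas_coe f).sub (meas_coe g)).abs
  have h1 : ∫ _ω in S, r ∂P ≤ ∫ ω in S, min 1 |f ω - g ω| ∂P := by
    apply setIntegral_mono_on (integrableOn_const)
      ((integrable_min1 f g).integrableOn) hSm
    intro ω hω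
    exact le_min hr1 hω
  have h2 : ∫ ω in S, min 1 |f ω - g ω| ∂P ≤ dist0 P f g :=
    setIntegral_le_integral (integrable_min1 f g)
      (Eventually.of_forall fun ω => le_min zero_le_one (abs_nonneg _))
  rw [setIntegral_const] at h1
  have key : (P S).toReal * r ≤ dist0 P f g := by
    rw [smul_eq_mul] at h1; exact h1.trans h2
  have : (P S).toReal ≤ dist0 P f g / r := by
    rw [le_div_iff₀ hr0]; exact key
  calc P S = ENNReal.ofReal ((P S).toReal) := (ENNReal.ofReal_toReal (measure_ne_top _ _)).symm
    _ ≤ ENNReal.ofReal (dist0 P f g / r) := ENNReal.ofReal_le_ofReal this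

lemma dist0_le_cut {f g : Ω →ₘ[P] ℝ} {r : ℝ} (hr : 0 < r) :
    dist0 P f g ≤ r + (P {ω | r ≤ |f ω - g ω|}).toReal := by
  set S := {ω | r ≤ |f ω - g ω|} with hS
  have hSm : MeasurableSet S :=
    measurableSet_le measurable_const ((meas_coe f).sub (meas_coe g)).abs
  have hpt : ∀ ω, min 1 |f ω - g ω| ≤ r + S.indicator (fun _ => (1:ℝ)) ω := by
    intro ω
    by_cases hω : ω ∈ S
    · rw [Set.indicator_of_mem hω]
      exact le_trans (min_le_left _ _) (by linarith)
    · rw [Set.indicator_of_notMem hω]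
      simp only [hS, mem_setOf_eq, not_le] at hω
      exact le_trans (min_le_right _ _) (by rw [add_zero]; exact hω.le)
  have hint : Integrable (fun ω => r + S.indicator (fun _ => (1:ℝ)) ω) P :=
    (integrable_const r).add ((integrable_const 1).indicator hSm)
  have h := integral_mono (integrable_min1 f g) hint hpt
  rw [integral_add (integrable_const r) ((integrable_const 1).indicator hSm),
    integral_indicator_const, integral_const] at h
  · simpa [dist0, measure_univ, measureReal_def] using h
  · exact hSm

end Stmt2Aux

namespace Stmt2Aux
open Real
open scoped ENNReal NNReal Topology
variable {Ω : Type*} [MeasurableSpace Ω] {P : Measure Ω} [IsProbabilityMeasure P]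

lemma mem_L0plus {f : Ω →ₘ[P] ℝ} (h : f ∈ L0plus P) : (0 : Ω →ₘ[P] ℝ) ≤ f := h

lemma key_gap {C : Set (Ω →ₘ[P] ℝ)} (hCL0 : C ⊆ L0plus P) (hconv : Convex ℝ C)
    (hbdd : Bounded0 P C) {s : ℝ} (hs : ∀ f ∈ C, UU P f ≤ s)
    {ε : ℝ} (hε : 0 < ε) :
    ∃ δ : ℝ, 0 < δ ∧ ∀ f ∈ C, ∀ g ∈ C, s - δ ≤ UU P f → s - δ ≤ UU P g →
      dist0 P f g < ε := by
  obtain ⟨ℓ, hℓ⟩ : ∃ ℓ : ℝ, (⨆ f ∈ C, P {ω | ℓ < f ω}) < ENNReal.ofReal (ε/4) := by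
    have h0 : (0:ℝ≥0∞) < ENNReal.ofReal (ε/4) := ENNReal.ofReal_pos.2 (by linarith)
    exact (hbdd.eventually_lt_const h0).exists
  have hexpe : Real.exp (-(ε/8)) < 1 := by
    rw [show (1:ℝ) = Real.exp 0 by rw [Real.exp_zero]]
    exact Real.exp_lt_exp.2 (by linarith)
  set c : ℝ := Real.exp (-ℓ) * (1 - Real.exp (-(ε/8)))^2 / 2 with hc_def
  have hc : 0 < c := by
    apply div_pos (mul_pos (Real.exp_pos _) (pow_pos (by linarith) 2)) two_pos
  refine ⟨c * (ε/4), by positivity, ?_⟩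
  intro f hf g hg hUf hUg
  have hf0 : (0 : Ω →ₘ[P] ℝ) ≤ f := hCL0 hf
  have hg0 : (0 : Ω →ₘ[P] ℝ) ≤ g := hCL0 hg
  set mid : Ω →ₘ[P] ℝ := (1/2 : ℝ) • f + (1/2 : ℝ) • g with hmid_def
  have hmid : mid ∈ C := by
    have := hconv hf hg (by norm_num : (0:ℝ) ≤ 1/2) (by norm_num : (0:ℝ) ≤ 1/2) (by norm_num)
    exact this
  have hmid0 : (0 : Ω →ₘ[P] ℝ) ≤ mid := hCL0 hmid
  have hmid_coe : ∀ᵐ ω ∂P, mid ω = (f ω + g ω)/2 := by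
    filter_upwards [MeasureTheory.AEEqFun.coeFn_add ((1/2:ℝ)•f) ((1/2:ℝ)•g),
      MeasureTheory.AEEqFun.coeFn_smul (1/2:ℝ) f,
      MeasureTheory.AEEqFun.coeFn_smul (1/2:ℝ) g] with ω h1 h2 h3
    rw [hmid_def]
    rw [h1]
    simp only [Pi.add_apply]
    rw [h2, h3]
    simp only [Pi.smul_apply, smul_eq_mul]
    ring
  set q : Ω → ℝ := fun ω => (Real.exp (-(f ω/2)) - Real.exp (-(g ω/2)))^2 / 2 with hq_def
  have m1 : Measurable fun ω => Real.exp (-(f ω/2)) :=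
    Real.measurable_exp.comp ((meas_coe f).div_const 2).neg
  have m2 : Measurable fun ω => Real.exp (-(g ω/2)) :=
    Real.measurable_exp.comp ((meas_coe g).div_const 2).neg
  have mq : Measurable q := ((m1.sub m2).pow_const 2).div_const 2
  have hq_nonneg : ∀ ω, 0 ≤ q ω := fun ω => by positivity
  have haef := ae_nonneg hf0
  have haeg := ae_nonneg hg0
  have hq_bd : ∀ᵐ ω ∂P, |q ω| ≤ 1 := by
    filter_upwards [haef, haeg] with ω h1 h2
    rw [abs_of_nonneg (hq_nonneg ω)]
    have e1 : Real.exp (-(f ω/2)) ≤ 1 := exp_neg_le_one (by linarith)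
    have e2 : Real.exp (-(g ω/2)) ≤ 1 := exp_neg_le_one (by linarith)
    have e3 := (Real.exp_pos (-(f ω/2))).le
    have e4 := (Real.exp_pos (-(g ω/2))).le
    simp only [hq_def]
    nlinarith
  have hq_int : Integrable q P := integrable_bdd mq.aestronglyMeasurable hq_bd
  have hq_val : ∫ ω, q ω ∂P ≤ c * (ε/4) := by
    have hptw : (fun ω => q ω) =ᵐ[P] fun ω => uu (mid ω) - (uu (f ω) + uu (g ω))/2 := by
      filter_upwards [hmid_coe] with ω h
      simp only [hq_def]
      rw [h]
      exact sq_half_identity (f ω) (g ω)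
    rw [integral_congr_ae hptw]
    have hint2 : Integrable (fun ω => (uu (f ω) + uu (g ω))/2) P :=
      ((integrable_uu hf0).add (integrable_uu hg0)).div_const 2
    have hub : ∫ ω, (uu (mid ω) - (uu (f ω) + uu (g ω))/2) ∂P
        = UU P mid - (UU P f + UU P g)/2 := by
      rw [integral_sub (integrable_uu hmid0) hint2,
        integral_div, integral_add (integrable_uu hf0) (integrable_uu hg0)]
      rfl
    rw [hub]
    have h1 := hs mid hmid
    linarith
  set A := {ω | ε/4 ≤ |f ω - g ω|} ∩ ({ω | f ω ≤ ℓ} ∪ {ω | g ω ≤ ℓ}) with hA_def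
  have hAm : MeasurableSet A := by
    apply MeasurableSet.inter
    · exact measurableSet_le measurable_const ((meas_coe f).sub (meas_coe g)).abs
    · exact (measurableSet_le (meas_coe f) measurable_const).union
        (measurableSet_le (meas_coe g) measurable_const)
  have hA_lb : ∀ᵐ ω ∂P, ω ∈ A → c ≤ q ω := by
    filter_upwards [haef, haeg] with ω h1 h2 hA
    obtain ⟨hd, hl⟩ := hA
    have hd' : ε/4 ≤ |f ω - g ω| := hd
    have he8 : (ε/4)/2 = ε/8 := by ring
    rcases le_total (f ω) (g ω) with hfg | hgf
    · have hfl : f ω ≤ ℓ := by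
        rcases hl with h | h
        · exact h
        · exact hfg.trans h
      have hstep : f ω + ε/4 ≤ g ω := by
        rw [abs_sub_comm, abs_of_nonneg (by linarith)] at hd'; linarith
      have hgl := gap_lower h1 hfl hstep (by linarith : (0:ℝ) < ε/4)
      rw [he8] at hgl
      simp only [hq_def, hc_def]
      linarith
    · have hgll : g ω ≤ ℓ := by
        rcases hl with h | h
        · exact hgf.trans h
        · exact h
      have hstep : g ω + ε/4 ≤ f ω := by
        rw [abs_of_nonneg (by linarith)] at hd'; linarith
      have hgl := gap_lower h2 hgll hstep (by linarith : (0:ℝ) < ε/4)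
      rw [he8] at hgl
      have hsq : (Real.exp (-(g ω/2)) - Real.exp (-(f ω/2)))^2
          = (Real.exp (-(f ω/2)) - Real.exp (-(g ω/2)))^2 := by ring
      rw [hsq] at hgl
      simp only [hq_def, hc_def]
      linarith
  have hPA' : (P A).toReal ≤ ε/4 := by
    have hA1 : ∫ _ω in A, c ∂P ≤ ∫ ω in A, q ω ∂P := by
      apply setIntegral_mono_ae_restrict
        (integrableOn_const) hq_int.integrableOn
      rw [EventuallyLE, ae_restrict_iff' hAm]
      exact hA_lb
    have hA2 : ∫ ω in A, q ω ∂P ≤ ∫ ω, q ω ∂P :=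
      setIntegral_le_integral hq_int (Eventually.of_forall hq_nonneg)
    rw [setIntegral_const, smul_eq_mul, mul_comm, measureReal_def] at hA1
    have : c * (P A).toReal ≤ c * (ε/4) := by linarith
    exact le_of_mul_le_mul_left this hc
  have hcut := dist0_le_cut (P := P) (f := f) (g := g) (r := ε/4) (by linarith)
  have hSsub : {ω | ε/4 ≤ |f ω - g ω|} ⊆ A ∪ {ω | ℓ < f ω} := by
    intro ω hω
    rcases le_or_gt (f ω) ℓ with h | h
    · exact Or.inl ⟨hω, Or.inl h⟩
    · exact Or.inr h
  have hPS : (P {ω | ε/4 ≤ |f ω - g ω|}).toReal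
      ≤ (P A).toReal + (P {ω | ℓ < f ω}).toReal := by
    have h1 : P {ω | ε/4 ≤ |f ω - g ω|} ≤ P A + P {ω | ℓ < f ω} :=
      le_trans (measure_mono hSsub) (measure_union_le _ _)
    have h2 := ENNReal.toReal_mono
      (by exact ENNReal.add_ne_top.2 ⟨measure_ne_top _ _, measure_ne_top _ _⟩) h1
    rwa [ENNReal.toReal_add (measure_ne_top _ _) (measure_ne_top _ _)] at h2
  have hPB : (P {ω | ℓ < f ω}).toReal ≤ ε/4 := by
    have h1 : P {ω | ℓ < f ω} ≤ ENNReal.ofReal (ε/4) := by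
      refine le_trans ?_ hℓ.le
      exact le_biSup (fun f : Ω →ₘ[P] ℝ => P {ω | ℓ < f ω}) hf
    have h2 := ENNReal.toReal_mono ENNReal.ofReal_ne_top h1
    rwa [ENNReal.toReal_ofReal (by linarith)] at h2
  calc dist0 P f g ≤ ε/4 + (P {ω | ε/4 ≤ |f ω - g ω|}).toReal := hcut
    _ ≤ ε/4 + ((P A).toReal + (P {ω | ℓ < f ω}).toReal) := by linarith
    _ ≤ ε/4 + (ε/4 + ε/4) := by linarith
    _ < ε := by linarith
end Stmt2Aux

namespace Stmt2Aux
open Real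
open scoped ENNReal NNReal Topology
variable {Ω : Type*} [MeasurableSpace Ω] {P : Measure Ω} [IsProbabilityMeasure P]

lemma exists_maximizer {C : Set (Ω →ₘ[P] ℝ)} (hCL0 : C ⊆ L0plus P) (hCne : C.Nonempty)
    (hconv : Convex ℝ C) (hcl : IsClosed0 P C) (hbdd : Bounded0 P C) :
    ∃ g ∈ C, ∀ f ∈ C, UU P f ≤ UU P g := by
  set s := sSup (UU P '' C) with hs_def
  have hbddA : BddAbove (UU P '' C) := ⟨1, by rintro y ⟨f, hf, rfl⟩; exact UU_le_one (hCL0 hf)⟩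
  have hub : ∀ f ∈ C, UU P f ≤ s := fun f hf => le_csSup hbddA ⟨f, hf, rfl⟩
  have hdel : ∀ k : ℕ, ∃ δ : ℝ, 0 < δ ∧ ∀ f ∈ C, ∀ g ∈ C,
      s - δ ≤ UU P f → s - δ ≤ UU P g → dist0 P f g < (1/4:ℝ)^k :=
    fun k => key_gap hCL0 hconv hbdd hub (by positivity)
  choose δ hδpos hδ using hdel
  set γ : ℕ → ℝ := fun k =>
    min ((1/2:ℝ)^k) ((Finset.range (k+1)).inf' (by simp) δ) with hγ_def
  have hγpos : ∀ k, 0 < γ k := by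
    intro k
    apply lt_min (by positivity)
    rw [Finset.lt_inf'_iff]
    intro b _
    exact hδpos b
  have hγle : ∀ j k : ℕ, j ≤ k → γ k ≤ δ j := by
    intro j k hjk
    refine le_trans (min_le_right _ _) ?_
    exact Finset.inf'_le δ (Finset.mem_range.2 (Nat.lt_succ_of_le hjk))
  have hγhalf : ∀ k, γ k ≤ (1/2:ℝ)^k := fun k => min_le_left _ _
  have hpick : ∀ k : ℕ, ∃ f ∈ C, s - γ k < UU P f := by
    intro k
    obtain ⟨y, hy, hlt⟩ := exists_lt_of_lt_csSup (hCne.image (UU P))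
      (by linarith [hγpos k] : s - γ k < s)
    obtain ⟨f, hf, rfl⟩ := hy
    exact ⟨f, hf, hlt⟩
  choose h hhC hhU using hpick
  have hdist : ∀ k : ℕ, dist0 P (h k) (h (k+1)) < (1/4:ℝ)^k := by
    intro k
    refine hδ k _ (hhC k) _ (hhC (k+1)) ?_ ?_
    · linarith [hhU k, hγle k k le_rfl]
    · linarith [hhU (k+1), hγle k (k+1) (Nat.le_succ k)]
  set A : ℕ → Set Ω := fun k => {ω | (1/2:ℝ)^k ≤ |h k ω - h (k+1) ω|} with hA_def
  have hPA : ∀ k, P (A k) ≤ ENNReal.ofReal ((1/2:ℝ)^k) := by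
    intro k
    refine le_trans (markov0 (by positivity) (pow_le_one₀ (by norm_num) (by norm_num))) ?_
    apply ENNReal.ofReal_le_ofReal
    rw [div_le_iff₀ (by positivity : (0:ℝ) < (1/2:ℝ)^k)]
    calc dist0 P (h k) (h (k+1)) ≤ (1/4:ℝ)^k := (hdist k).le
      _ = (1/2:ℝ)^k * (1/2:ℝ)^k := by rw [← mul_pow]; norm_num
  have hsum : ∑' k, P (A k) ≠ ⊤ := by
    have h1 : ∑' k, P (A k) ≤ ∑' k, ENNReal.ofReal ((1/2:ℝ)^k) :=
      ENNReal.tsum_le_tsum hPA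
    have h2 : ∑' k, ENNReal.ofReal ((1/2:ℝ)^k) ≠ ⊤ := by
      have hre : ∀ k : ℕ, ENNReal.ofReal ((1/2:ℝ)^k) = (ENNReal.ofReal (1/2))^k :=
        fun k => ENNReal.ofReal_pow (by norm_num) k
      simp only [hre]
      rw [ENNReal.tsum_geometric]
      apply ENNReal.inv_ne_top.2
      have : ENNReal.ofReal (1/2) < 1 := by
        rw [ENNReal.ofReal_lt_one]; norm_num
      simp only [ne_eq, tsub_eq_zero_iff_le, not_le]
      exact this
    exact ne_top_of_le_ne_top h2 h1
  have hBC : P (limsup A atTop) = 0 := measure_limsup_atTop_eq_zero hsum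
  have haeA : ∀ᵐ ω ∂P, ∀ᶠ k in atTop, |h k ω - h (k+1) ω| < (1/2:ℝ)^k := by
    filter_upwards [measure_eq_zero_iff_ae_notMem.1 hBC] with ω hω
    rw [mem_limsup_iff_frequently_mem, Filter.not_frequently] at hω
    filter_upwards [hω] with k hk
    simpa [hA_def, not_le] using hk
  have hcauchy : ∀ᵐ ω ∂P, ∃ l : ℝ, Tendsto (fun k => h k ω) atTop (𝓝 l) := by
    filter_upwards [haeA] with ω hω
    apply cauchySeq_tendsto_of_complete
    apply cauchySeq_of_summable_dist
    apply summable_of_isBigO_nat (summable_geometric_of_lt_one (by norm_num : (0:ℝ) ≤ 1/2)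
      (by norm_num))
    apply Asymptotics.IsBigO.of_bound 1
    filter_upwards [hω] with k hk
    rw [Real.dist_eq, Real.norm_eq_abs, abs_abs, Real.norm_eq_abs,
      abs_of_nonneg (by positivity : (0:ℝ) ≤ (1/2:ℝ)^k), one_mul]
    exact hk.le
  set g0 : Ω → ℝ := fun ω => limUnder atTop (fun k => h k ω) with hg0_def
  have htends : ∀ᵐ ω ∂P, Tendsto (fun k => h k ω) atTop (𝓝 (g0 ω)) := by
    filter_upwards [hcauchy] with ω hω
    obtain ⟨l, hl⟩ := hω
    rw [hg0_def]
    simpa [hl.limUnder_eq] using hl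
  have hmeasg0 : AEMeasurable g0 P :=
    aemeasurable_of_tendsto_metrizable_ae atTop (fun k => (meas_coe (h k)).aemeasurable) htends
  set gE : Ω →ₘ[P] ℝ := MeasureTheory.AEEqFun.mk g0 hmeasg0.aestronglyMeasurable with hgE_def
  have hcoe : (gE : Ω → ℝ) =ᵐ[P] g0 := MeasureTheory.AEEqFun.coeFn_mk _ _
  have htends' : ∀ᵐ ω ∂P, Tendsto (fun k => h k ω) atTop (𝓝 (gE ω)) := by
    filter_upwards [htends, hcoe] with ω h1 h2
    rw [h2]; exact h1
  have hdistto : Tendsto (fun k => dist0 P (h k) gE) atTop (𝓝 0) := by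
    have h0 : (0:ℝ) = ∫ _ω, (0:ℝ) ∂P := by rw [integral_zero]
    rw [h0]
    apply tendsto_integral_of_dominated_convergence (fun _ => (1:ℝ))
    · intro k
      exact ((continuous_min.comp (continuous_const.prodMk continuous_abs)).comp_aestronglyMeasurable
        (((meas_coe (h k)).sub (meas_coe gE)).aestronglyMeasurable))
    · exact integrable_const 1
    · intro k
      apply Eventually.of_forall
      intro ω
      rw [Real.norm_eq_abs]
      rw [abs_of_nonneg (le_min zero_le_one (abs_nonneg _))]
      exact min_le_left _ _
    · filter_upwards [htends'] with ω hω
      have h1 : Tendsto (fun k => (h k ω) - gE ω) atTop (𝓝 (0:ℝ)) := by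
        simpa using hω.sub (tendsto_const_nhds (x := gE ω))
      have h2 : Tendsto (fun k => |h k ω - gE ω|) atTop (𝓝 (0:ℝ)) := by
        simpa using h1.abs
      have h3 : Tendsto (fun k => min 1 |h k ω - gE ω|) atTop (𝓝 (min 1 (0:ℝ))) :=
        tendsto_const_nhds.min h2
      simpa using h3
  have hgC : gE ∈ C := by
    apply hcl
    intro ε hε
    obtain ⟨k, hk⟩ := (hdistto.eventually_lt_const hε).exists
    exact ⟨h k, hhC k, by rwa [dist0_comm]⟩
  have hUlim : Tendsto (fun k => UU P (h k)) atTop (𝓝 (UU P gE)) := by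
    apply tendsto_integral_of_dominated_convergence (fun _ => (1:ℝ))
    · intro k; exact continuous_uu.comp_aestronglyMeasurable (h k).aestronglyMeasurable
    · exact integrable_const 1
    · intro k
      filter_upwards [ae_nonneg (hCL0 (hhC k))] with ω hω
      rw [Real.norm_eq_abs]; exact abs_uu_le hω
    · filter_upwards [htends'] with ω hω
      exact (continuous_uu.tendsto (gE ω)).comp hω
  have hγ0 : Tendsto γ atTop (𝓝 (0:ℝ)) := by
    apply squeeze_zero (fun k => (hγpos k).le) hγhalf
    exact tendsto_pow_atTop_nhds_zero_of_lt_one (by norm_num) (by norm_num)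
  have hlow : Tendsto (fun k => s - γ k) atTop (𝓝 s) := by
    simpa using (tendsto_const_nhds (x := s)).sub hγ0
  have hUge : s ≤ UU P gE :=
    le_of_tendsto_of_tendsto' hlow hUlim (fun k => (hhU k).le)
  exact ⟨gE, hgC, fun f hf => (hub f hf).trans hUge⟩
end Stmt2Aux

namespace Stmt2Aux
open Real
open scoped ENNReal NNReal Topology
variable {Ω : Type*} [MeasurableSpace Ω] {P : Measure Ω} [IsProbabilityMeasure P]

lemma gradient {C : Set (Ω →ₘ[P] ℝ)} (hCL0 : C ⊆ L0plus P) (hconv : Convex ℝ C)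
    {g : Ω →ₘ[P] ℝ} (hg : g ∈ C) (hmax : ∀ f ∈ C, UU P f ≤ UU P g)
    {f : Ω →ₘ[P] ℝ} (hf : f ∈ C) :
    ∫⁻ ω, ENNReal.ofReal (f ω * Real.exp (-(g ω))) ∂P
      ≤ ∫⁻ ω, ENNReal.ofReal (g ω * Real.exp (-(g ω))) ∂P := by
  have hf0 := ae_nonneg (hCL0 hf)
  have hg0 := ae_nonneg (hCL0 hg)
  set t : ℕ → ℝ := fun n => (1/2:ℝ)^n with ht_def
  have ht_pos : ∀ n, 0 < t n := fun n => by positivity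
  have ht_le1 : ∀ n, t n ≤ 1 := fun n => pow_le_one₀ (by norm_num) (by norm_num)
  set c : ℕ → Ω →ₘ[P] ℝ := fun n => (1 - t n) • g + t n • f with hc_def
  have hcC : ∀ n, c n ∈ C := fun n =>
    hconv hg hf (by linarith [ht_le1 n]) (ht_pos n).le (by ring)
  have hc_coe : ∀ n, ∀ᵐ ω ∂P, c n ω = g ω + t n * (f ω - g ω) := by
    intro n
    filter_upwards [MeasureTheory.AEEqFun.coeFn_add ((1 - t n) • g) (t n • f),
      MeasureTheory.AEEqFun.coeFn_smul (1 - t n) g,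
      MeasureTheory.AEEqFun.coeFn_smul (t n) f] with ω h1 h2 h3
    rw [hc_def]
    rw [h1]
    simp only [Pi.add_apply]
    rw [h2, h3]
    simp only [Pi.smul_apply, smul_eq_mul]
    ring
  set F : ℕ → Ω → ℝ := fun n ω => (uu (g ω + t n * (f ω - g ω)) - uu (g ω)) / t n + 1
    with hF_def
  have hFmono : ∀ ω, Monotone (fun n => F n ω) := by
    intro ω
    apply monotone_nat_of_le_succ
    intro n
    have := slope_mono (b := g ω) (d := f ω - g ω) (t1 := t (n+1)) (t2 := t n)
      (ht_pos (n+1)) (by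
        rw [ht_def]
        exact pow_le_pow_of_le_one (by norm_num) (by norm_num) (Nat.le_succ n))
    simp only [hF_def]
    linarith
  have hFnonneg : ∀ᵐ ω ∂P, ∀ n, 0 ≤ F n ω := by
    filter_upwards [hf0, hg0] with ω h1 h2
    intro n
    have hm := hFmono ω (Nat.zero_le n)
    have harg : g ω + (1:ℝ) * (f ω - g ω) = f ω := by ring
    have hF0 : F 0 ω = uu (f ω) - uu (g ω) + 1 := by
      simp only [hF_def, ht_def, pow_zero, harg, div_one]
    have hm' : F 0 ω ≤ F n ω := hm
    rw [hF0] at hm'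
    have := uu_nonneg h1
    have := uu_le_one (g ω)
    linarith
  have hFlim : ∀ ω, Tendsto (fun n => F n ω) atTop
      (𝓝 (Real.exp (-(g ω)) * (f ω - g ω) + 1)) := by
    intro ω
    have := (slope_tendsto (g ω) (f ω - g ω)).add (tendsto_const_nhds (x := (1:ℝ)))
    simpa only [hF_def, ht_def] using this
  have hargmeas : ∀ n, Measurable (fun ω => g ω + t n * (f ω - g ω)) :=
    fun n => (meas_coe g).add (((meas_coe f).sub (meas_coe g)).const_mul (t n))
  have hFmeas : ∀ n, Measurable (F n) := by
    intro n
    apply Measurable.add_const _ 1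
    exact ((continuous_uu.measurable.comp (hargmeas n)).sub
      (continuous_uu.measurable.comp (meas_coe g))).div_const (t n)
  have harg0 : ∀ᵐ ω ∂P, ∀ n, 0 ≤ g ω + t n * (f ω - g ω) := by
    filter_upwards [hf0, hg0] with ω h1 h2
    intro n
    have hr : g ω + t n * (f ω - g ω) = (1 - t n) * g ω + t n * f ω := by ring
    rw [hr]
    exact add_nonneg (mul_nonneg (by linarith [ht_le1 n]) h2)
      (mul_nonneg (ht_pos n).le h1)
  have hFint : ∀ n, Integrable (F n) P := by
    intro n
    apply integrable_bdd (hFmeas n).aestronglyMeasurable (c := 1 / t n + 1)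
    filter_upwards [hf0, hg0, harg0] with ω h1 h2 h3
    have hA0 := uu_nonneg (h3 n)
    have hA1 := uu_le_one (g ω + t n * (f ω - g ω))
    have hg1 := uu_nonneg h2
    have hg2 := uu_le_one (g ω)
    have habs : |uu (g ω + t n * (f ω - g ω)) - uu (g ω)| ≤ 1 :=
      abs_le.2 ⟨by linarith, by linarith⟩
    have hdivle : |uu (g ω + t n * (f ω - g ω)) - uu (g ω)| / t n ≤ 1 / t n :=
      (div_le_div_iff_of_pos_right (ht_pos n)).2 habs
    calc |F n ω| ≤ |(uu (g ω + t n * (f ω - g ω)) - uu (g ω)) / t n| + |(1:ℝ)| := by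
          simp only [hF_def]; exact abs_add_le _ _
      _ ≤ 1 / t n + 1 := by
          rw [abs_one, abs_div, abs_of_pos (ht_pos n)]
          linarith
  have hF_le_one : ∀ n, ∫ ω, F n ω ∂P ≤ 1 := by
    intro n
    have hcong : (fun ω => F n ω) =ᵐ[P] fun ω => (uu (c n ω) - uu (g ω)) / t n + 1 := by
      filter_upwards [hc_coe n] with ω h
      simp only [hF_def]
      rw [h]
    have hint1 : Integrable (fun ω => (uu (c n ω) - uu (g ω)) / t n + 1) P :=
      (hFint n).congr hcong
    have heq : ∫ ω, F n ω ∂P = (UU P (c n) - UU P g) / t n + 1 := by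
      rw [integral_congr_ae hcong]
      have hint2 : Integrable (fun ω => (uu (c n ω) - uu (g ω)) / t n) P :=
        ((integrable_uu (hCL0 (hcC n))).sub (integrable_uu (hCL0 hg))).div_const (t n)
      rw [integral_add hint2 (integrable_const (1:ℝ)), integral_const]
      simp only [measureReal_def, measure_univ, ENNReal.toReal_one, one_smul, smul_eq_mul, one_mul]
      rw [integral_div, integral_sub (integrable_uu (hCL0 (hcC n))) (integrable_uu (hCL0 hg))]
      rfl
    rw [heq]
    have hle := hmax (c n) (hcC n)
    have : (UU P (c n) - UU P g) / t n ≤ 0 :=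
      div_nonpos_iff.2 (Or.inr ⟨by linarith, (ht_pos n).le⟩)
    linarith
  have hlin : ∀ n, ∫⁻ ω, ENNReal.ofReal (F n ω) ∂P ≤ 1 := by
    intro n
    rw [← ofReal_integral_eq_lintegral_ofReal (hFint n)
      (by filter_upwards [hFnonneg] with ω h using h n)]
    calc ENNReal.ofReal (∫ ω, F n ω ∂P) ≤ ENNReal.ofReal 1 :=
          ENNReal.ofReal_le_ofReal (hF_le_one n)
      _ = 1 := ENNReal.ofReal_one
  have hmct : ∫⁻ ω, ⨆ n, ENNReal.ofReal (F n ω) ∂P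
      = ⨆ n, ∫⁻ ω, ENNReal.ofReal (F n ω) ∂P :=
    lintegral_iSup' (fun n => (ENNReal.measurable_ofReal.comp (hFmeas n)).aemeasurable)
      (Eventually.of_forall fun ω i j hij => ENNReal.ofReal_le_ofReal (hFmono ω hij))
  have hsup_le : ∫⁻ ω, ⨆ n, ENNReal.ofReal (F n ω) ∂P ≤ 1 := by
    rw [hmct]; exact iSup_le hlin
  have hsup_eq : ∀ ω, (⨆ n, ENNReal.ofReal (F n ω))
      = ENNReal.ofReal (Real.exp (-(g ω)) * (f ω - g ω) + 1) := by
    intro ω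
    have hmono : Monotone (fun n => ENNReal.ofReal (F n ω)) :=
      fun i j hij => ENNReal.ofReal_le_ofReal (hFmono ω hij)
    have ht2 : Tendsto (fun n => ENNReal.ofReal (F n ω)) atTop
        (𝓝 (ENNReal.ofReal (Real.exp (-(g ω)) * (f ω - g ω) + 1))) :=
      (ENNReal.continuous_ofReal.tendsto _).comp (hFlim ω)
    exact tendsto_nhds_unique (tendsto_atTop_iSup hmono) ht2
  have hkey : ∫⁻ ω, ENNReal.ofReal (Real.exp (-(g ω)) * (f ω - g ω) + 1) ∂P ≤ 1 := by
    rw [← lintegral_congr hsup_eq]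
    exact hsup_le
  have hsplit : ∀ᵐ ω ∂P, ENNReal.ofReal (f ω * Real.exp (-(g ω))) + 1
      = ENNReal.ofReal (Real.exp (-(g ω)) * (f ω - g ω) + 1)
        + ENNReal.ofReal (g ω * Real.exp (-(g ω))) := by
    filter_upwards [hf0, hg0] with ω h1 h2
    have hE := (Real.exp_pos (-(g ω))).le
    have hy1 : g ω * Real.exp (-(g ω)) ≤ 1 := self_mul_exp_neg_le_one h2
    have hx0 : 0 ≤ f ω * Real.exp (-(g ω)) := mul_nonneg h1 hE
    have hy0 : 0 ≤ g ω * Real.exp (-(g ω)) := mul_nonneg h2 hE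
    have hnn : 0 ≤ Real.exp (-(g ω)) * (f ω - g ω) + 1 := by nlinarith
    rw [← ENNReal.ofReal_add hnn hy0, ← ENNReal.ofReal_one,
      ← ENNReal.ofReal_add hx0 zero_le_one]
    congr 1
    ring
  have hmeas_fE : Measurable (fun ω => ENNReal.ofReal (f ω * Real.exp (-(g ω)))) :=
    ENNReal.measurable_ofReal.comp
      ((meas_coe f).mul (Real.measurable_exp.comp (meas_coe g).neg))
  have hmeas_gE : Measurable (fun ω => ENNReal.ofReal (g ω * Real.exp (-(g ω)))) :=
    ENNReal.measurable_ofReal.comp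
      ((meas_coe g).mul (Real.measurable_exp.comp (meas_coe g).neg))
  have hy_le : ∫⁻ ω, ENNReal.ofReal (g ω * Real.exp (-(g ω))) ∂P ≤ 1 := by
    have hb : ∀ᵐ ω ∂P, ENNReal.ofReal (g ω * Real.exp (-(g ω))) ≤ 1 := by
      filter_upwards [hg0] with ω h2
      calc ENNReal.ofReal (g ω * Real.exp (-(g ω))) ≤ ENNReal.ofReal 1 :=
            ENNReal.ofReal_le_ofReal (self_mul_exp_neg_le_one h2)
        _ = 1 := ENNReal.ofReal_one
    calc ∫⁻ ω, ENNReal.ofReal (g ω * Real.exp (-(g ω))) ∂P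
        ≤ ∫⁻ _ω, (1:ℝ≥0∞) ∂P := lintegral_mono_ae hb
      _ = 1 := by rw [lintegral_one, measure_univ]
  have hfinal : (∫⁻ ω, ENNReal.ofReal (f ω * Real.exp (-(g ω))) ∂P) + 1
      ≤ (∫⁻ ω, ENNReal.ofReal (g ω * Real.exp (-(g ω))) ∂P) + 1 := by
    calc (∫⁻ ω, ENNReal.ofReal (f ω * Real.exp (-(g ω))) ∂P) + 1
        = ∫⁻ ω, ENNReal.ofReal (f ω * Real.exp (-(g ω))) + 1 ∂P := by
          rw [lintegral_add_right _ measurable_const, lintegral_const, measure_univ, mul_one]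
      _ = ∫⁻ ω, ENNReal.ofReal (Real.exp (-(g ω)) * (f ω - g ω) + 1)
            + ENNReal.ofReal (g ω * Real.exp (-(g ω))) ∂P := lintegral_congr_ae hsplit
      _ = (∫⁻ ω, ENNReal.ofReal (Real.exp (-(g ω)) * (f ω - g ω) + 1) ∂P)
            + ∫⁻ ω, ENNReal.ofReal (g ω * Real.exp (-(g ω))) ∂P :=
          lintegral_add_right _ hmeas_gE
      _ ≤ 1 + ∫⁻ ω, ENNReal.ofReal (g ω * Real.exp (-(g ω))) ∂P := by
          exact add_le_add_left hkey _
      _ = (∫⁻ ω, ENNReal.ofReal (g ω * Real.exp (-(g ω))) ∂P) + 1 := add_comm _ _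
  exact (ENNReal.add_le_add_iff_right ENNReal.one_ne_top).1 hfinal
end Stmt2Aux
/-- A nonempty convexly compact (convex, closed and bounded) set
`C ⊆ L⁰₊` has at least one outer support point. -/
theorem statement2 {Ω : Type*} [MeasurableSpace Ω] (P : Measure Ω) [IsProbabilityMeasure P]
    (C : Set (Ω →ₘ[P] ℝ)) (hCL0 : C ⊆ L0plus P) (hCne : C.Nonempty)
    (hconv : Convex ℝ C) (hcl : IsClosed0 P C) (hbdd : Bounded0 P C) :
    (osp P C).Nonempty := by
  classical
  by_cases hC0 : C = {0}
  · refine ⟨0, ⟨?_, ?_⟩, Or.inl hC0⟩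
    · rw [hC0]; exact Set.mem_singleton 0
    · intro h hh _
      rw [hC0] at hh
      exact (Set.mem_singleton_iff.1 hh).symm
  · obtain ⟨g, hgC, hgmax⟩ := Stmt2Aux.exists_maximizer hCL0 hCne hconv hcl hbdd
    have hex : ∃ f0 ∈ C, f0 ≠ 0 := by
      by_contra hcon
      push_neg at hcon
      exact hC0 (Set.eq_singleton_iff_nonempty_unique_mem.2 ⟨hCne, fun x hx => hcon x hx⟩)
    obtain ⟨f0, hf0C, hf0ne⟩ := hex
    have hUg_pos : 0 < Stmt2Aux.UU P g :=
      lt_of_lt_of_le (Stmt2Aux.UU_pos (hCL0 hf0C) hf0ne) (hgmax f0 hf0C)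
    set w : Ω → ENNReal := fun ω => ENNReal.ofReal (Real.exp (-(g ω))) with hw
    have hwmeas : Measurable w :=
      ENNReal.measurable_ofReal.comp (Real.measurable_exp.comp (Stmt2Aux.meas_coe g).neg)
    set μ : Measure Ω := P.withDensity w with hμ
    have hg0ae := Stmt2Aux.ae_nonneg (hCL0 hgC)
    have hpair : ∀ f : Ω →ₘ[P] ℝ, f ∈ C →
        pairing μ f = ∫⁻ ω, ENNReal.ofReal (f ω * Real.exp (-(g ω))) ∂P := by
      intro f hf
      have hfmeas : AEMeasurable (fun ω => ENNReal.ofReal (f ω)) P :=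
        (ENNReal.measurable_ofReal.comp (Stmt2Aux.meas_coe f)).aemeasurable
      rw [pairing, hμ, lintegral_withDensity_eq_lintegral_mul₀ hwmeas.aemeasurable hfmeas]
      apply lintegral_congr_ae
      apply Eventually.of_forall
      intro ω
      simp only [Pi.mul_apply, hw]
      rw [← ENNReal.ofReal_mul (Real.exp_pos (-(g ω))).le,
        mul_comm (Real.exp (-(g ω))) (f ω)]
    haveI hfin : IsFiniteMeasure μ := by
      constructor
      rw [hμ, withDensity_apply _ MeasurableSet.univ, Measure.restrict_univ]
      have hle : ∫⁻ ω, w ω ∂P ≤ ∫⁻ _ω, (1 : ENNReal) ∂P := by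
        apply lintegral_mono_ae
        filter_upwards [hg0ae] with ω h2
        simp only [hw]
        calc ENNReal.ofReal (Real.exp (-(g ω))) ≤ ENNReal.ofReal 1 :=
              ENNReal.ofReal_le_ofReal (Stmt2Aux.exp_neg_le_one h2)
          _ = 1 := ENNReal.ofReal_one
      calc ∫⁻ ω, w ω ∂P ≤ ∫⁻ _ω, (1 : ENNReal) ∂P := hle
        _ = 1 := by rw [lintegral_one, measure_univ]
        _ < ⊤ := ENNReal.one_lt_top
    have hsf : SigmaFinite μ := inferInstance
    have habs : μ ≪ P := MeasureTheory.withDensity_absolutelyContinuous _ _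
    have hmeas_gE : Measurable (fun ω => ENNReal.ofReal (g ω * Real.exp (-(g ω)))) :=
      ENNReal.measurable_ofReal.comp
        ((Stmt2Aux.meas_coe g).mul (Real.measurable_exp.comp (Stmt2Aux.meas_coe g).neg))
    have hpg := hpair g hgC
    have hup : pairing μ g < ⊤ := by
      rw [hpg]
      have hle : ∫⁻ ω, ENNReal.ofReal (g ω * Real.exp (-(g ω))) ∂P
          ≤ ∫⁻ _ω, (1 : ENNReal) ∂P := by
        apply lintegral_mono_ae
        filter_upwards [hg0ae] with ω h2
        calc ENNReal.ofReal (g ω * Real.exp (-(g ω))) ≤ ENNReal.ofReal 1 :=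
              ENNReal.ofReal_le_ofReal (Stmt2Aux.self_mul_exp_neg_le_one h2)
          _ = 1 := ENNReal.ofReal_one
      calc ∫⁻ ω, ENNReal.ofReal (g ω * Real.exp (-(g ω))) ∂P
          ≤ ∫⁻ _ω, (1 : ENNReal) ∂P := hle
        _ = 1 := by rw [lintegral_one, measure_univ]
        _ < ⊤ := ENNReal.one_lt_top
    have hpos : 0 < pairing μ g := by
      rw [hpg]
      have hcase := (zero_le (a := ∫⁻ ω, ENNReal.ofReal (g ω * Real.exp (-(g ω))) ∂P)).lt_or_eq
      rcases hcase with h | h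
      · exact h
      exfalso
      have h0 : ∫⁻ ω, ENNReal.ofReal (g ω * Real.exp (-(g ω))) ∂P = 0 := h.symm
      rw [lintegral_eq_zero_iff' hmeas_gE.aemeasurable] at h0
      have hgz : (g : Ω → ℝ) =ᵐ[P] fun _ => (0:ℝ) := by
        filter_upwards [h0, hg0ae] with ω h1 h2
        have h3 : ENNReal.ofReal (g ω * Real.exp (-(g ω))) = 0 := h1
        rw [ENNReal.ofReal_eq_zero] at h3
        have h4 : g ω ≤ 0 := by nlinarith [Real.exp_pos (-(g ω))]
        exact le_antisymm h4 h2
      have hgeq : g = 0 := Stmt2Aux.eq_zero_of_ae_zero hgz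
      rw [hgeq, Stmt2Aux.UU_zero] at hUg_pos
      exact lt_irrefl 0 hUg_pos
    have hsup : (⨆ f ∈ C, pairing μ f) = pairing μ g := by
      apply le_antisymm
      · apply iSup₂_le
        intro f hf
        rw [hpair f hf, hpg]
        exact Stmt2Aux.gradient hCL0 hconv hgC hgmax hf
      · exact le_biSup _ hgC
    have hmaxset : g ∈ maxSet P C := by
      refine ⟨hgC, ?_⟩
      intro h hh hle
      have h1 : Stmt2Aux.UU P h ≤ Stmt2Aux.UU P g := hgmax h hh
      have h2 : Stmt2Aux.UU P g ≤ Stmt2Aux.UU P h :=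
        Stmt2Aux.UU_mono (hCL0 hgC) (hCL0 hh) hle
      have hnn : 0 ≤ᵐ[P] fun ω => Stmt2Aux.uu (h ω) - Stmt2Aux.uu (g ω) := by
        filter_upwards [MeasureTheory.AEEqFun.coeFn_le.2 hle] with ω h3
        have := Stmt2Aux.uu_mono h3
        simp only [Pi.zero_apply]
        linarith
      have hint : Integrable (fun ω => Stmt2Aux.uu (h ω) - Stmt2Aux.uu (g ω)) P :=
        (Stmt2Aux.integrable_uu (hCL0 hh)).sub (Stmt2Aux.integrable_uu (hCL0 hgC))
      have hzero : ∫ ω, (Stmt2Aux.uu (h ω) - Stmt2Aux.uu (g ω)) ∂P = 0 := by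
        rw [integral_sub (Stmt2Aux.integrable_uu (hCL0 hh))
          (Stmt2Aux.integrable_uu (hCL0 hgC))]
        have heq : Stmt2Aux.UU P h = Stmt2Aux.UU P g := le_antisymm h1 h2
        simpa [Stmt2Aux.UU] using sub_eq_zero.2 heq
      rw [integral_eq_zero_iff_of_nonneg_ae hnn hint] at hzero
      apply MeasureTheory.AEEqFun.ext
      filter_upwards [hzero] with ω h4
      have h5 : Stmt2Aux.uu (h ω) - Stmt2Aux.uu (g ω) = 0 := h4
      simp only [Stmt2Aux.uu] at h5
      have h6 : Real.exp (-(h ω)) = Real.exp (-(g ω)) := by linarith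
      have h7 := Real.exp_injective h6
      linarith [neg_injective h7]
    exact ⟨g, hmaxset, Or.inr ⟨μ, habs, hsf, hpos, hup, hsup⟩⟩
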